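/- Let H ∈ ℝ^{m×d}, r > 0, σ_ε ≥ 0, σ_y > 0, m₀ ∈ ℝ^d and y ∈ ℝ^m. Set C := r²·I (d×d), R := σ_y²·I + σ_ε²·H·Hᵀ (m×m), η₁ := σ_ε²/r², η₂ := σ_y²/r², W := η₁·H·Hᵀ + η₂·I and Y := I + Hᵀ·W⁻¹·H. Then the Bayesian posterior mean equals the MAS closed-form solution: (C⁻¹ + Hᵀ·R⁻¹·H)⁻¹·(C⁻¹·m₀ + Hᵀ·R⁻¹·y) = Y⁻¹·(m₀ + Hᵀ·W⁻¹·y). -/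

import Mathlib

open Matrix

lemma smul_inv_aux {n : ℕ} (k : ℝ) (hk : k ≠ 0) (A : Matrix (Fin n) (Fin n) ℝ) :
    (k • A)⁻¹ = k⁻¹ • A⁻¹ := by
  by_cases h : IsUnit A.det
  · have : Invertible k := invertibleOfNonzero hk
    rw [Matrix.inv_smul (A := A) k h, invOf_eq_inv]
  · have h2 : ¬ IsUnit (k • A).det := by
      rw [Matrix.det_smul]
      intro hu
      exact h (isUnit_of_mul_isUnit_right hu)
    rw [Matrix.nonsing_inv_apply_not_isUnit _ h, Matrix.nonsing_inv_apply_not_isUnit _ h2,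
      smul_zero]

/-- **Equivalence of the Bayesian posterior mean and the MAS closed form.**
With `C := r² I`, `R := σ_y² I + σ_ε² H Hᵀ`, `η₁ := σ_ε²/r²`, `η₂ := σ_y²/r²`,
`W := η₁ H Hᵀ + η₂ I` and `Y := I + Hᵀ W⁻¹ H`, the Bayesian posterior mean
`(C⁻¹ + Hᵀ R⁻¹ H)⁻¹ (C⁻¹ m₀ + Hᵀ R⁻¹ y)` equals `Y⁻¹ (m₀ + Hᵀ W⁻¹ y)`. -/
theorem bayes_eq_mas {m d : ℕ} (H : Matrix (Fin m) (Fin d) ℝ)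
    (r σε σy : ℝ) (hr : 0 < r) (hσε : 0 ≤ σε) (hσy : 0 < σy)
    (m₀ : Fin d → ℝ) (y : Fin m → ℝ)
    (C : Matrix (Fin d) (Fin d) ℝ) (hC : C = r ^ 2 • 1)
    (R : Matrix (Fin m) (Fin m) ℝ) (hR : R = σy ^ 2 • 1 + σε ^ 2 • (H * Hᵀ))
    (η₁ η₂ : ℝ) (hη₁ : η₁ = σε ^ 2 / r ^ 2) (hη₂ : η₂ = σy ^ 2 / r ^ 2)
    (W : Matrix (Fin m) (Fin m) ℝ) (hW : W = η₁ • (H * Hᵀ) + η₂ • 1)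
    (Y : Matrix (Fin d) (Fin d) ℝ) (hY : Y = 1 + Hᵀ * W⁻¹ * H) :
    (C⁻¹ + Hᵀ * R⁻¹ * H)⁻¹ *ᵥ (C⁻¹ *ᵥ m₀ + Hᵀ *ᵥ (R⁻¹ *ᵥ y)) =
      Y⁻¹ *ᵥ (m₀ + Hᵀ *ᵥ (W⁻¹ *ᵥ y)) := by
  have hr2 : (r ^ 2 : ℝ) ≠ 0 := by positivity
  have hRW : R = r ^ 2 • W := by
    rw [hR, hW, smul_add, smul_smul, smul_smul, hη₁, hη₂,
      mul_div_cancel₀ _ hr2, mul_div_cancel₀ _ hr2, add_comm]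
  have hCinv : C⁻¹ = (r ^ 2)⁻¹ • (1 : Matrix (Fin d) (Fin d) ℝ) := by
    rw [hC, smul_inv_aux _ hr2, inv_one]
  have hRinv : R⁻¹ = (r ^ 2)⁻¹ • W⁻¹ := by
    rw [hRW, smul_inv_aux _ hr2]
  have hsum : C⁻¹ + Hᵀ * R⁻¹ * H = (r ^ 2)⁻¹ • Y := by
    rw [hCinv, hRinv, hY, smul_add, Matrix.mul_smul, Matrix.smul_mul]
  rw [hsum, hCinv, hRinv, smul_inv_aux _ (inv_ne_zero hr2), inv_inv]
  simp [Matrix.smul_mulVec, Matrix.mulVec_smul, smul_add, smul_smul,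
    mul_inv_cancel₀ hr2, Matrix.one_mulVec]
  rw [← smul_add, Matrix.mulVec_smul, smul_smul, mul_inv_cancel₀ hr2, one_smul]
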